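/- For every ξ ∈ ℤ, the synchronous temporal robustness satisfies η^c(x_ξ) ≥ η^c(x) − |ξ|. -/

import Mathlib

open scoped Classical

noncomputable section

def shift {α : Type*} (x : ℤ → α) (κ : ℤ) : ℤ → α := fun t => x (t + κ)

def ashift {n : ℕ} (x : ℤ → Fin n → ℝ) (κ : Fin n → ℤ) : ℤ → Fin n → ℝ :=
  fun t i => x (t + κ i) i

def beta {n : ℕ} (c : (Fin n → ℝ) → ℤ → ℝ) (x : ℤ → Fin n → ℝ) : ℤ :=
  if ∀ t : ℤ, 0 ≤ c (x t) t then 1 else -1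

def absE (a : EReal) : EReal := max a (-a)

def eta {n : ℕ} (c : (Fin n → ℝ) → ℤ → ℝ) (x : ℤ → Fin n → ℝ) : EReal :=
  ((beta c x : ℝ) : EReal) * sSup ((fun τ : ℕ => ((τ : ℝ) : EReal)) ''
    {τ : ℕ | ∀ κ : ℤ, |κ| ≤ (τ : ℤ) → beta c (shift x κ) = beta c x})

def theta {n : ℕ} (c : (Fin n → ℝ) → ℤ → ℝ) (x : ℤ → Fin n → ℝ) : EReal :=
  ((beta c x : ℝ) : EReal) * sSup ((fun τ : ℕ => ((τ : ℝ) : EReal)) ''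
    {τ : ℕ | ∀ κ : Fin n → ℤ, (∀ i, |κ i| ≤ (τ : ℤ)) → beta c (ashift x κ) = beta c x})

lemma shift_shift {α : Type*} (x : ℤ → α) (a b : ℤ) :
    shift (shift x a) b = shift x (b + a) := by
  funext t; simp [shift, add_assoc]

lemma shift_zero {α : Type*} (x : ℤ → α) : shift x 0 = x := by
  funext t; simp [shift]

lemma beta_cases {n : ℕ} (c : (Fin n → ℝ) → ℤ → ℝ) (x : ℤ → Fin n → ℝ) :
    beta c x = 1 ∨ beta c x = -1 := by
  unfold beta; split <;> simp

def Sset {n : ℕ} (c : (Fin n → ℝ) → ℤ → ℝ) (x : ℤ → Fin n → ℝ) : Set ℕ :=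
  {τ : ℕ | ∀ κ : ℤ, |κ| ≤ (τ : ℤ) → beta c (shift x κ) = beta c x}

lemma zero_mem_Sset {n : ℕ} (c : (Fin n → ℝ) → ℤ → ℝ) (x : ℤ → Fin n → ℝ) :
    0 ∈ Sset c x := by
  intro κ hκ
  have h0 : |κ| = 0 := le_antisymm (by exact_mod_cast hκ) (abs_nonneg κ)
  have : κ = 0 := abs_eq_zero.mp h0
  subst this; rw [shift_zero]

lemma sSup_nonneg {n : ℕ} (c : (Fin n → ℝ) → ℤ → ℝ) (x : ℤ → Fin n → ℝ) :
    (0 : EReal) ≤ sSup ((fun τ : ℕ => ((τ : ℝ) : EReal)) '' Sset c x) := by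
  have := le_sSup (Set.mem_image_of_mem (fun τ : ℕ => ((τ : ℝ) : EReal)) (zero_mem_Sset c x))
  simpa using this

lemma mem_shift {n : ℕ} (c : (Fin n → ℝ) → ℤ → ℝ) (y : ℤ → Fin n → ℝ) (ζ : ℤ)
    (hb : beta c (shift y ζ) = beta c y) {τ ρ : ℕ} (hρ : (ρ : ℤ) + |ζ| ≤ (τ : ℤ))
    (hτ : τ ∈ Sset c y) : ρ ∈ Sset c (shift y ζ) := by
  intro κ hκ
  rw [shift_shift, hτ (κ + ζ) (by have := abs_add_le κ ζ; omega), hb]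


-- abbreviation for the image set

def fE : ℕ → EReal := fun τ : ℕ => ((τ : ℝ) : EReal)

lemma sSup_le_shift {n : ℕ} (c : (Fin n → ℝ) → ℤ → ℝ) (y : ℤ → Fin n → ℝ) (ζ : ℤ)
    (hb : beta c (shift y ζ) = beta c y) :
    sSup (fE '' Sset c y) ≤ sSup (fE '' Sset c (shift y ζ)) + ((ζ.natAbs : ℝ) : EReal) := by
  apply sSup_le
  rintro e ⟨τ, hτ, rfl⟩
  set j : ℕ := ζ.natAbs with hjdef
  by_cases hτj : τ ≤ j
  · calc fE τ ≤ ((j : ℝ) : EReal) := by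
          simp only [fE, EReal.coe_le_coe_iff]; exact_mod_cast hτj
      _ = 0 + ((j : ℝ) : EReal) := by rw [zero_add]
      _ ≤ _ := add_le_add_left (sSup_nonneg c (shift y ζ)) _
  · have hρ : (τ - j : ℕ) ∈ Sset c (shift y ζ) := by
      apply mem_shift c y ζ hb (τ := τ) _ hτ
      have : |ζ| = (j : ℤ) := by rw [hjdef, Int.abs_eq_natAbs]
      rw [this]; omega
    have h1 : fE (τ - j) ≤ sSup (fE '' Sset c (shift y ζ)) :=
      le_sSup (Set.mem_image_of_mem fE hρ)
    calc fE τ = fE (τ - j) + ((j : ℝ) : EReal) := by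
          simp only [fE, ← EReal.coe_add, EReal.coe_eq_coe_iff]
          rw [Nat.cast_sub (le_of_not_ge hτj)]; ring
      _ ≤ _ := add_le_add_left h1 _

lemma opp_bound {n : ℕ} (c : (Fin n → ℝ) → ℤ → ℝ) (x : ℤ → Fin n → ℝ) (ξ : ℤ)
    (hb : beta c (shift x ξ) ≠ beta c x) {τ σ : ℕ}
    (hτ : τ ∈ Sset c x) (hσ : σ ∈ Sset c (shift x ξ)) :
    (σ : ℤ) + (τ : ℤ) < |ξ| := by
  by_contra h
  push_neg at h
  have hτξ : (τ : ℤ) < |ξ| := by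
    by_contra h2
    push_neg at h2
    exact hb (hτ ξ h2)
  have key : ∀ m : ℤ, |m| ≤ (τ : ℤ) → |m - ξ| ≤ (σ : ℤ) → False := by
    intro m hmabs hκ
    have h1 : beta c (shift x m) = beta c x := hτ m hmabs
    have h2 : beta c (shift (shift x ξ) (m - ξ)) = beta c (shift x ξ) := hσ (m - ξ) hκ
    rw [shift_shift, sub_add_cancel, h1] at h2
    exact hb h2.symm
  rcases le_or_gt 0 ξ with hξ | hξ
  · rw [abs_of_nonneg hξ] at h hτξ
    exact key (τ : ℤ) (by simp) (by rw [abs_sub_comm, abs_of_nonneg (by omega)]; omega)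
  · rw [abs_of_neg hξ] at h hτξ
    exact key (-(τ : ℤ)) (by simp) (by rw [abs_of_nonneg (by omega)]; omega)

/-- η^c(x_ξ) ≥ η^c(x) − |ξ|. -/
theorem stmt1 {n : ℕ} (c : (Fin n → ℝ) → ℤ → ℝ) (x : ℤ → Fin n → ℝ) (ξ : ℤ) :
    eta c (shift x ξ) ≥ eta c x - ((|ξ| : ℝ) : EReal) := by
  have habs : ((|ξ| : ℝ) : EReal) = ((ξ.natAbs : ℝ) : EReal) := by
    norm_cast
    rw [← Nat.cast_natAbs]
  have e1 : eta c x = ((beta c x : ℝ) : EReal) * sSup (fE '' Sset c x) := rfl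
  have e2 : eta c (shift x ξ) =
      ((beta c (shift x ξ) : ℝ) : EReal) * sSup (fE '' Sset c (shift x ξ)) := rfl
  rw [ge_iff_le, e1, e2, habs]
  set A := sSup (fE '' Sset c x) with hA
  set B := sSup (fE '' Sset c (shift x ξ)) with hB
  have hA0 : (0 : EReal) ≤ A := sSup_nonneg c x
  have hB0 : (0 : EReal) ≤ B := sSup_nonneg c (shift x ξ)
  have hxi_ne_bot : ((ξ.natAbs : ℝ) : EReal) ≠ ⊥ := EReal.coe_ne_bot _
  have hxi_ne_top : ((ξ.natAbs : ℝ) : EReal) ≠ ⊤ := EReal.coe_ne_top _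
  rcases beta_cases c x with hb1 | hb1 <;> rcases beta_cases c (shift x ξ) with hb2 | hb2 <;>
    rw [hb1, hb2] <;>
    simp only [Int.cast_one, Int.cast_neg, EReal.coe_one, EReal.coe_neg, EReal.neg_mul, one_mul]
  · -- beta x = 1, beta shift = 1
    have hbe : beta c (shift x ξ) = beta c x := hb2.trans hb1.symm
    rw [EReal.sub_le_iff_le_add (Or.inl hxi_ne_bot) (Or.inl hxi_ne_top)]
    exact sSup_le_shift c x ξ hbe
  · -- beta x = 1, beta shift = -1
    have hbne : beta c (shift x ξ) ≠ beta c x := by rw [hb1, hb2]; decide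
    rw [EReal.sub_le_iff_le_add (Or.inl hxi_ne_bot) (Or.inl hxi_ne_top)]
    apply sSup_le
    rintro e ⟨τ, hτ, rfl⟩
    have hτξ : (τ : ℤ) < |ξ| := by
      have := opp_bound c x ξ hbne hτ (zero_mem_Sset c (shift x ξ))
      omega
    have hτj : τ ≤ ξ.natAbs := by
      rw [Int.abs_eq_natAbs] at hτξ; omega
    set d : ℕ := ξ.natAbs - τ with hd
    have hBd : B ≤ ((d : ℝ) : EReal) := by
      apply sSup_le
      rintro e ⟨σ, hσ, rfl⟩
      have h1 := opp_bound c x ξ hbne hτ hσ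
      rw [Int.abs_eq_natAbs] at h1
      have h2 : σ ≤ d := by omega
      simp only [fE, EReal.coe_le_coe_iff]
      exact_mod_cast h2
    have hneg : -((d : ℝ) : EReal) ≤ -B := EReal.neg_le_neg_iff.2 hBd
    have heq : fE τ = -((d : ℝ) : EReal) + ((ξ.natAbs : ℝ) : EReal) := by
      simp only [fE, ← EReal.coe_neg, ← EReal.coe_add, EReal.coe_eq_coe_iff]
      have h3 : τ + d = ξ.natAbs := by omega
      have h4 := congrArg (fun m : ℕ => (m : ℝ)) h3
      push_cast at h4
      linarith
    rw [heq]
    exact add_le_add_left hneg _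
  · -- beta x = -1, beta shift = 1
    have h1 : -A - ((ξ.natAbs : ℝ) : EReal) ≤ 0 - 0 :=
      EReal.sub_le_sub (EReal.neg_le.mpr (by simpa using hA0))
        (by exact_mod_cast (Nat.cast_nonneg ξ.natAbs : (0:ℝ) ≤ (ξ.natAbs : ℝ)))
    calc -A - ((ξ.natAbs : ℝ) : EReal) ≤ 0 - 0 := h1
      _ = 0 := by simp
      _ ≤ B := hB0
  · -- beta x = -1, beta shift = -1
    have hbe : beta c (shift x ξ) = beta c x := hb2.trans hb1.symm
    have h' : beta c (shift (shift x ξ) (-ξ)) = beta c (shift x ξ) := by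
      rw [shift_shift, neg_add_cancel, shift_zero]; exact hbe.symm
    have F := sSup_le_shift c (shift x ξ) (-ξ) h'
    rw [shift_shift, neg_add_cancel, shift_zero, Int.natAbs_neg] at F
    have hneg : -(A + ((ξ.natAbs : ℝ) : EReal)) ≤ -B := EReal.neg_le_neg_iff.2 F
    rw [EReal.neg_add (Or.inr (EReal.coe_ne_top _)) (Or.inr (EReal.coe_ne_bot _))] at hneg
    exact hneg
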